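/- Expected mistake upper bound for randomized realizable apple tasting: for any hypothesis class H, the minimax expected number of mistakes over T rounds under apple tasting feedback in the realizable setting is at most inf over w ∈ ℕ of AL_w(H) + 2√((w−1)T). -/

import Mathlib

open scoped ENNReal NNReal


/-- `ALShatter H w d` : the hypothesis class `H` shatters some Apple Littlestone tree of
width `w` and depth `d`. Width `0` means the path has already ended (took the maximal
number of right/1 edges), in which case shattering only requires a consistent hypothesis. -/
def ALShatter {X : Type*} : Set (X → Bool) → ℕ → ℕ → Prop
  | H, _, 0 => H.Nonempty
  | H, 0, _ + 1 => H.Nonempty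
  | H, w + 1, d + 1 =>
      ∃ x : X, ALShatter {h | h ∈ H ∧ h x = false} (w + 1) d ∧
               ALShatter {h | h ∈ H ∧ h x = true} w d

/-- The Apple Littlestone dimension of `H` at width `w`. -/
noncomputable def ALdim {X : Type*} (H : Set (X → Bool)) (w : ℕ) : ℕ∞ :=
  sSup {d : ℕ∞ | ∃ n : ℕ, ALShatter H w n ∧ d = (n : ℕ∞)}

/-- `LShatter H d` : `H` shatters some Littlestone tree of depth `d`. -/
def LShatter {X : Type*} : Set (X → Bool) → ℕ → Prop
  | H, 0 => H.Nonempty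
  | H, d + 1 =>
      ∃ x : X, LShatter {h | h ∈ H ∧ h x = false} d ∧
               LShatter {h | h ∈ H ∧ h x = true} d

/-- The Littlestone dimension of `H`. -/
noncomputable def Ldim {X : Type*} (H : Set (X → Bool)) : ℕ∞ :=
  sSup {d : ℕ∞ | ∃ n : ℕ, LShatter H n ∧ d = (n : ℕ∞)}

/-- The Effective width of `H`: the least width `w ≥ 1` at which the
Apple Littlestone dimension is finite. -/
noncomputable def EffW {X : Type*} (H : Set (X → Bool)) : ℕ∞ :=
  sInf {w : ℕ∞ | ∃ n : ℕ, 1 ≤ n ∧ ALdim H n ≠ ⊤ ∧ w = (n : ℕ∞)}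
/-- One run of a randomized apple-tasting learner `A` (a map from the apple-tasting
history — past instances together with the label if it was observed — and the current
instance, to a distribution over predictions) on the stream `x` with true labels `y`:
the distribution, after `t` rounds, of the pair (history, number of mistakes so far).
The label `y t` is recorded (observed) only when the prediction is 1. -/
noncomputable def runAT {X : Type*} (A : List (X × Option Bool) → X → PMF Bool)
    (x : ℕ → X) (y : ℕ → Bool) : ℕ → PMF (List (X × Option Bool) × ℕ)
  | 0 => PMF.pure ([], 0)
  | t + 1 =>
      (runAT A x y t).bind fun s =>
        (A s.1 (x t)).bind fun b =>
          PMF.pure (s.1 ++ [(x t, if b then some (y t) else none)],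
            s.2 + (if b ≠ y t then 1 else 0))

/-- Expected number of mistakes of the randomized apple-tasting learner `A` over `T`
rounds on the stream `x` with true labels `y`. -/
noncomputable def expMistakes {X : Type*} (A : List (X × Option Bool) → X → PMF Bool)
    (x : ℕ → X) (y : ℕ → Bool) (T : ℕ) : ℝ≥0∞ :=
  ∑' s : List (X × Option Bool) × ℕ, runAT A x y T s * s.2

/-- Coercion from ℕ∞ to ℝ≥0∞. -/
noncomputable def enatToENNReal (n : ℕ∞) : ℝ≥0∞ :=
  if n = ⊤ then ⊤ else (n.toNat : ℝ≥0∞)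

namespace ATproof
variable {X : Type*}

/-- branch of a version space -/
def br (V : Set (X → Bool)) (x : X) (b : Bool) : Set (X → Bool) := {g | g ∈ V ∧ g x = b}

lemma br_subset (V : Set (X → Bool)) (x : X) (b : Bool) : br V x b ⊆ V := fun _ hg => hg.1

lemma alshatter_zero (H : Set (X → Bool)) (w : ℕ) (h : H.Nonempty) : ALShatter H w 0 := by
  cases w <;> exact h

lemma alshatter_width_zero (H : Set (X → Bool)) (d : ℕ) (h : H.Nonempty) : ALShatter H 0 d := by
  cases d <;> exact h

lemma alshatter_step {H : Set (X → Bool)} {u d : ℕ} (x : X)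
    (h0 : ALShatter (br H x false) (u + 1) d) (h1 : ALShatter (br H x true) u d) :
    ALShatter H (u + 1) (d + 1) := ⟨x, h0, h1⟩

lemma alshatter_nonempty : ∀ (d w : ℕ) (H : Set (X → Bool)), ALShatter H w d → H.Nonempty
  | 0, w, _, h => by cases w <;> exact h
  | _ + 1, 0, _, h => h
  | d + 1, w + 1, _, ⟨_, h1, _⟩ =>
      (alshatter_nonempty d (w + 1) _ h1).mono (fun _ hg => hg.1)

lemma alshatter_mono : ∀ (d w : ℕ) {H H' : Set (X → Bool)},
    H ⊆ H' → ALShatter H w d → ALShatter H' w d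
  | 0, w, _, _, hs, h => by cases w <;> exact h.mono hs
  | _ + 1, 0, _, _, hs, h => h.mono hs
  | d + 1, w + 1, H, H', hs, ⟨x, h1, h2⟩ =>
      ⟨x, alshatter_mono d (w + 1) (fun g hg => ⟨hs hg.1, hg.2⟩) h1,
          alshatter_mono d w (fun g hg => ⟨hs hg.1, hg.2⟩) h2⟩

lemma alshatter_succ_depth : ∀ (d w : ℕ) (H : Set (X → Bool)),
    ALShatter H w (d + 1) → ALShatter H w d
  | d, 0, H, h => alshatter_width_zero H d h
  | 0, w + 1, H, ⟨x, h1, _⟩ =>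
      alshatter_zero H (w + 1) ((alshatter_nonempty 0 (w + 1) _ h1).mono (fun _ hg => hg.1))
  | d + 1, w + 1, H, ⟨x, h1, h2⟩ =>
      ⟨x, alshatter_succ_depth d (w + 1) _ h1, alshatter_succ_depth d w _ h2⟩

lemma alshatter_antidepth {H : Set (X → Bool)} {w : ℕ} : ∀ {d d' : ℕ}, d' ≤ d →
    ALShatter H w d → ALShatter H w d' := by
  intro d
  induction d with
  | zero => intro d' hd h; rw [Nat.le_zero.mp hd]; exact h
  | succ n ih =>
      intro d' hd h
      rcases Nat.lt_or_ge d' (n + 1) with hlt | hge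
      · exact ih (Nat.lt_succ_iff.mp hlt) (alshatter_succ_depth n w H h)
      · rw [Nat.le_antisymm hd hge]; exact h

lemma le_ALdim {H : Set (X → Bool)} {w n : ℕ} (h : ALShatter H w n) :
    (n : ℕ∞) ≤ ALdim H w := le_sSup ⟨n, h, rfl⟩

lemma ALdim_le {H : Set (X → Bool)} {w : ℕ} {m : ℕ∞}
    (h : ∀ n : ℕ, ALShatter H w n → (n : ℕ∞) ≤ m) : ALdim H w ≤ m :=
  sSup_le (fun _ ⟨n, hn, hd⟩ => hd ▸ h n hn)

lemma ALdim_mono {H H' : Set (X → Bool)} (hs : H ⊆ H') (w : ℕ) :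
    ALdim H w ≤ ALdim H' w :=
  ALdim_le (fun n hn => le_ALdim (alshatter_mono n w hs hn))

lemma ALdim_empty (w : ℕ) : ALdim (∅ : Set (X → Bool)) w = 0 := by
  refine le_antisymm (ALdim_le fun n hn => ?_) zero_le
  exact absurd (alshatter_nonempty n w _ hn) (by simp [Set.not_nonempty_empty])

lemma alshatter_of_le_ALdim {H : Set (X → Bool)} {w n : ℕ} (hne : H.Nonempty)
    (h : (n : ℕ∞) ≤ ALdim H w) : ALShatter H w n := by
  rcases Nat.eq_zero_or_pos n with rfl | hn
  · exact alshatter_zero H w hne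
  by_contra hc
  have hall : ∀ k : ℕ, ALShatter H w k → (k : ℕ∞) ≤ (n - 1 : ℕ) := by
    intro k hk
    by_contra hk'
    have : n ≤ k := by
      have := lt_of_not_ge hk'
      have hkk : (n - 1 : ℕ) < k := by exact_mod_cast this
      omega
    exact hc (alshatter_antidepth this hk)
  have := le_trans h (ALdim_le hall)
  have : (n : ℕ∞) ≤ ((n - 1 : ℕ) : ℕ∞) := this
  have : n ≤ n - 1 := by exact_mod_cast this
  omega

/-- shatter at the (finite) dimension itself -/
lemma alshatter_toNat {H : Set (X → Bool)} {w : ℕ} (hne : H.Nonempty) (hT : ALdim H w ≠ ⊤) :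
    ALShatter H w (ALdim H w).toNat :=
  alshatter_of_le_ALdim hne (le_of_eq (ENat.coe_toNat hT))

lemma ALdim_lt_top_ne {H : Set (X → Bool)} {w : ℕ} : True := trivial

/-- key lemma, width-1 / last-width case: a false-branch mistake strictly decreases ALdim -/
lemma case2_key {V : Set (X → Bool)} {x : X} (hT : ALdim V 1 ≠ ⊤)
    (h0 : (br V x false).Nonempty) (h1 : (br V x true).Nonempty) :
    ALdim (br V x false) 1 < ALdim V 1 := by
  have hle : ALdim (br V x false) 1 ≤ ALdim V 1 := ALdim_mono (br_subset V x false) 1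
  have hT0 : ALdim (br V x false) 1 ≠ ⊤ := fun h => hT (top_le_iff.mp (h ▸ hle))
  set n := (ALdim (br V x false) 1).toNat with hn
  have hsh0 : ALShatter (br V x false) 1 n := alshatter_toNat h0 hT0
  have hsh1 : ALShatter (br V x true) 0 n := alshatter_width_zero _ n h1
  have : ALShatter V 1 (n + 1) := alshatter_step x hsh0 hsh1
  have hlev : ((n + 1 : ℕ) : ℕ∞) ≤ ALdim V 1 := le_ALdim this
  have heq : ALdim (br V x false) 1 = (n : ℕ∞) := (ENat.coe_toNat hT0).symm
  rw [heq]
  exact lt_of_lt_of_le (by exact_mod_cast Nat.lt_succ_self n) hlev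

/-- key lemma: in the exploration case, a false-negative keeps dimension bounded at shrunken width -/
lemma case4_key {V : Set (X → Bool)} {x : X} {u : ℕ} (hT : ALdim V (u + 2) ≠ ⊤)
    (heq : ALdim (br V x false) (u + 2) = ALdim V (u + 2))
    (h1 : (br V x true).Nonempty) :
    ALdim (br V x true) (u + 1) ≤ ALdim V (u + 2) := by
  by_cases hD : ALdim V (u + 2) = 0
  · -- no splitting point at all
    rw [hD]
    refine ALdim_le fun n hn => ?_
    rcases Nat.eq_zero_or_pos n with rfl | hpos
    · simp
    · exfalso
      have h1' : ALShatter (br V x true) (u + 1) 1 := alshatter_antidepth hpos hn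
      obtain ⟨z, hz0, hz1⟩ := h1'
      have hz0' : (br (br V x true) z false).Nonempty := alshatter_nonempty 0 (u + 1) _ hz0
      have hz1' : (br (br V x true) z true).Nonempty := alshatter_nonempty 0 u _ hz1
      have : ALShatter V (u + 2) 1 :=
        alshatter_step z (alshatter_zero _ _ (hz0'.mono (fun g hg => ⟨hg.1.1, hg.2⟩)))
          (alshatter_zero _ _ (hz1'.mono (fun g hg => ⟨hg.1.1, hg.2⟩)))
      have := le_ALdim this
      rw [hD] at this
      exact absurd this (by simp)
  · by_contra hc
    push_neg at hc
    set n := (ALdim V (u + 2)).toNat with hn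
    have hDn : ALdim V (u + 2) = (n : ℕ∞) := (ENat.coe_toNat hT).symm
    have h0ne : (br V x false).Nonempty := by
      by_contra he
      rw [Set.not_nonempty_iff_eq_empty.mp he, ALdim_empty] at heq
      exact hD heq.symm
    have hsh0 : ALShatter (br V x false) (u + 2) n :=
      alshatter_of_le_ALdim h0ne (heq ▸ hDn ▸ le_refl _)
    have hsh1 : ALShatter (br V x true) (u + 1) n :=
      alshatter_of_le_ALdim h1 (le_of_lt (hDn ▸ hc))
    have := le_ALdim (alshatter_step x hsh0 hsh1)
    rw [hDn] at this
    have : ((n + 1 : ℕ) : ℕ∞) ≤ (n : ℕ∞) := this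
    have : n + 1 ≤ n := by exact_mod_cast this
    omega



lemma tsum_pure_mul {α : Type*} (a : α) (g : α → ℝ≥0∞) :
    ∑' b, (PMF.pure a) b * g b = g a := by
  rw [tsum_eq_single a]
  · simp [PMF.pure_apply]
  · intro b hb
    simp [PMF.pure_apply, hb]

lemma tsum_bind_mul {α β : Type*} (q : PMF α) (f : α → PMF β) (g : β → ℝ≥0∞) :
    ∑' b, (q.bind f) b * g b = ∑' a, q a * ∑' b, f a b * g b := by
  simp only [PMF.bind_apply]
  calc ∑' b, (∑' a, q a * f a b) * g b
      = ∑' b, ∑' a, q a * f a b * g b := by simp_rw [ENNReal.tsum_mul_right]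
    _ = ∑' a, ∑' b, q a * f a b * g b := ENNReal.tsum_comm
    _ = ∑' a, q a * ∑' b, f a b * g b := by simp_rw [mul_assoc, ENNReal.tsum_mul_left]

noncomputable def bern (p : ℝ≥0∞) (h : p ≤ 1) : PMF Bool :=
  PMF.ofFintype (fun b => cond b p (1 - p)) (by simp [Fintype.sum_bool, add_tsub_cancel_of_le h])

lemma tsum_bool' (f : Bool → ℝ≥0∞) : ∑' b, f b = f false + f true := tsum_bool f

example (p : ℝ≥0∞) (h : p ≤ 1) : (bern p h) true = p := rfl
example (p : ℝ≥0∞) (h : p ≤ 1) : (bern p h) false = 1 - p := rfl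

lemma natize_le {a b : ℕ∞} (hb : b ≠ ⊤) (h : a ≤ b) :
    ((a.toNat : ℝ≥0∞)) ≤ (b.toNat : ℝ≥0∞) := by
  have := ENat.toNat_le_toNat h hb
  exact_mod_cast this

lemma natize_lt {a b : ℕ∞} (hb : b ≠ ⊤) (h : a < b) :
    ((a.toNat : ℝ≥0∞)) + 1 ≤ (b.toNat : ℝ≥0∞) := by
  have ha : a ≠ ⊤ := (h.trans_le le_top).ne
  lift a to ℕ using ha
  lift b to ℕ using hb
  have : a < b := by exact_mod_cast h
  simp only [ENat.toNat_coe]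
  exact_mod_cast this

lemma arith_case4 {p β D D1 : ℝ≥0∞} {k : ℕ} (hp : p ≤ 1) (hβ0 : p = 0 → β = ⊤)
    (hβ : p ≠ 0 → p * β = 1 - p) (hD : D1 ≤ D) :
    p * (D1 + β * k) + (1 - p) * (1 + (D + β * (k + 1))) ≤ (D + β * (k + 1)) + p := by
  by_cases hp0 : p = 0
  · have : β * ((k : ℝ≥0∞) + 1) = ⊤ := by
      rw [hβ0 hp0]
      refine ENNReal.top_mul fun h => ?_
      exact one_ne_zero (add_eq_zero.mp h).2
    rw [this]
    simp
  · set r := 1 - p with hr_def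
    have hr : p + r = 1 := add_tsub_cancel_of_le hp
    have hq : p * β = r := hβ hp0
    have e1 : r + r * β = β := by
      calc r + r * β = p * β + r * β := by rw [hq]
        _ = (p + r) * β := by ring
        _ = β := by rw [hr, one_mul]
    calc p * (D1 + β * k) + r * (1 + (D + β * (k + 1)))
        ≤ p * (D + β * k) + r * (1 + (D + β * (k + 1))) := by gcongr
      _ = ((p + r) * D + (p + r) * (β * k)) + (r + r * β) := by ring
      _ = D + β * k + β := by rw [hr, e1]; ring
      _ ≤ (D + β * (k + 1)) + p := by
          rw [mul_add, mul_one, ← add_assoc]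
          exact le_add_right le_rfl

lemma arith_caseFP {p Φ : ℝ≥0∞} (hp : p ≤ 1) :
    p * (1 + Φ) + (1 - p) * Φ = Φ + p := by
  have hr : p + (1 - p) = 1 := add_tsub_cancel_of_le hp
  calc p * (1 + Φ) + (1 - p) * Φ = p + (p + (1 - p)) * Φ := by ring
    _ = Φ + p := by rw [hr, one_mul]; ring

def IsExplore (V : Set (X → Bool)) (ω : ℕ) (x : X) : Prop :=
  (br V x true).Nonempty ∧ 2 ≤ ω ∧ ¬ (ALdim (br V x false) ω < ALdim V ω)

open Classical in
noncomputable def stepSt (σ : Set (X → Bool) × ℕ) (x : X) : Option Bool → Set (X → Bool) × ℕ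
  | none => σ
  | some b => (br σ.1 x b, if IsExplore σ.1 σ.2 x ∧ b = true then σ.2 - 1 else σ.2)

noncomputable def stateOf (H : Set (X → Bool)) (w0 : ℕ) (hist : List (X × Option Bool)) :
    Set (X → Bool) × ℕ :=
  hist.foldl (fun σ e => stepSt σ e.1 e.2) (H, w0)

open Classical in
noncomputable def predictP (pe : ℝ≥0∞) (hpe : pe ≤ 1) (σ : Set (X → Bool) × ℕ) (x : X) :
    PMF Bool :=
  if (br σ.1 x true).Nonempty then
    (if IsExplore σ.1 σ.2 x then bern pe hpe else PMF.pure true)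
  else PMF.pure false

noncomputable def Phi (β : ℝ≥0∞) (σ : Set (X → Bool) × ℕ) : ℝ≥0∞ :=
  ((ALdim σ.1 σ.2).toNat : ℝ≥0∞) + β * ((σ.2 - 1 : ℕ) : ℝ≥0∞)

def Inv (h : X → Bool) (σ : Set (X → Bool) × ℕ) : Prop :=
  h ∈ σ.1 ∧ 1 ≤ σ.2 ∧ ALdim σ.1 σ.2 ≠ ⊤

lemma stateOf_append (H : Set (X → Bool)) (w0 : ℕ) (hist : List (X × Option Bool))
    (e : X × Option Bool) :
    stateOf H w0 (hist ++ [e]) = stepSt (stateOf H w0 hist) e.1 e.2 := by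
  simp [stateOf, List.foldl_append]

lemma stepSt_none (σ : Set (X → Bool) × ℕ) (x : X) : stepSt σ x none = σ := rfl

open Classical in
lemma stepSt_some (σ : Set (X → Bool) × ℕ) (x : X) (b : Bool) :
    stepSt σ x (some b) =
      (br σ.1 x b, if IsExplore σ.1 σ.2 x ∧ b = true then σ.2 - 1 else σ.2) := rfl

lemma inv_step {h : X → Bool} {σ : Set (X → Bool) × ℕ} (x : X) (b : Bool) (hI : Inv h σ) :
    Inv h (stepSt σ x (if b then some (h x) else none)) := by
  obtain ⟨hh, hω, hT⟩ := hI
  cases b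
  · simpa [stepSt_none] using ⟨hh, hω, hT⟩
  · simp only [if_pos, stepSt_some]
    by_cases hE : IsExplore σ.1 σ.2 x ∧ h x = true
    · rw [if_pos hE]
      obtain ⟨⟨h1ne, hω2, hnlt⟩, hx⟩ := hE
      have heq : ALdim (br σ.1 x false) σ.2 = ALdim σ.1 σ.2 :=
        le_antisymm (ALdim_mono (br_subset _ _ _) _) (le_of_not_gt hnlt)
      obtain ⟨u, hu⟩ : ∃ u, σ.2 = u + 2 := ⟨σ.2 - 2, by omega⟩
      refine ⟨⟨hh, rfl⟩, by omega, ?_⟩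
      have hle : ALdim (br σ.1 x true) (u + 1) ≤ ALdim σ.1 σ.2 := by
        rw [hu] at heq hT ⊢
        exact case4_key hT heq h1ne
      rw [hx, hu]
      show ALdim (br σ.1 x true) (u + 2 - 1) ≠ ⊤
      have : u + 2 - 1 = u + 1 := by omega
      rw [this]
      exact fun htop => hT (top_le_iff.mp (htop ▸ hle))
    · rw [if_neg hE]
      refine ⟨⟨hh, rfl⟩, hω, ?_⟩
      have hle : ALdim (br σ.1 x (h x)) σ.2 ≤ ALdim σ.1 σ.2 :=
        ALdim_mono (br_subset _ _ _) _
      exact fun htop => hT (top_le_iff.mp (htop ▸ hle))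

lemma core_step {h : X → Bool} {σ : Set (X → Bool) × ℕ} (x : X)
    {pe β : ℝ≥0∞} (hpe : pe ≤ 1) (hβ0 : pe = 0 → β = ⊤) (hβ : pe ≠ 0 → pe * β = 1 - pe)
    (hI : Inv h σ) :
    (∑' b : Bool, predictP pe hpe σ x b *
      ((if b ≠ h x then (1 : ℝ≥0∞) else 0) + Phi β (stepSt σ x (if b then some (h x) else none))))
      ≤ Phi β σ + pe := by
  obtain ⟨hh, hω, hT⟩ := hI
  rw [tsum_bool']
  simp only [predictP]
  by_cases h1 : (br σ.1 x true).Nonempty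
  · rw [if_pos h1]
    by_cases hE : IsExplore σ.1 σ.2 x
    · -- exploration case: bernoulli
      rw [if_pos hE]
      have hω2 : 2 ≤ σ.2 := hE.2.1
      have hnlt : ¬ ALdim (br σ.1 x false) σ.2 < ALdim σ.1 σ.2 := hE.2.2
      have heq : ALdim (br σ.1 x false) σ.2 = ALdim σ.1 σ.2 :=
        le_antisymm (ALdim_mono (br_subset _ _ _) _) (le_of_not_gt hnlt)
      have hbf : (bern pe hpe) false = 1 - pe := rfl
      have hbt : (bern pe hpe) true = pe := rfl
      cases hx : h x
      · -- truth is false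
        simp only [hx, hbf, hbt, stepSt_none, stepSt_some, reduceIte, ne_eq,
          Bool.true_eq_false, Bool.false_eq_true, not_false_eq_true, not_true_eq_false,
          if_true, if_false, and_false, zero_mul, one_mul, zero_add, add_zero]
        have hPhieq : Phi β (br σ.1 x false, σ.2) = Phi β σ := by
          simp only [Phi, heq]
        rw [hPhieq, add_comm ((1 - pe) * Phi β σ), arith_caseFP hpe]
      · -- truth is true: false negative risk
        simp only [hx, hbf, hbt, stepSt_none, stepSt_some, reduceIte, ne_eq,
          Bool.true_eq_false, Bool.false_eq_true, not_false_eq_true, not_true_eq_false,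
          if_true, if_false, and_true, zero_mul, one_mul, zero_add, add_zero]
        rw [if_pos (⟨hE, rfl⟩ : IsExplore σ.1 σ.2 x ∧ true = true)]
        obtain ⟨u, hu⟩ : ∃ u, σ.2 = u + 2 := ⟨σ.2 - 2, by omega⟩
        have hle : ALdim (br σ.1 x true) (u + 1) ≤ ALdim σ.1 σ.2 := by
          rw [hu] at heq hT ⊢
          exact case4_key hT heq h1
        have hD1 : ((ALdim (br σ.1 x true) (u + 1)).toNat : ℝ≥0∞)
            ≤ ((ALdim σ.1 σ.2).toNat : ℝ≥0∞) := natize_le hT hle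
        simp only [Phi, hu]
        have e1 : (u + 2 - 1 : ℕ) = u + 1 := by omega
        have e2 : (u + 1 - 1 : ℕ) = u := by omega
        rw [e1, e2]
        have ecast : ((u + 1 : ℕ) : ℝ≥0∞) = (u : ℝ≥0∞) + 1 := by push_cast; ring
        rw [ecast, add_comm]
        rw [hu] at hD1
        exact arith_case4 hpe hβ0 hβ hD1
    · -- deterministic predict-1 case
      rw [if_neg hE]
      cases hx : h x
      · -- mistake: false positive, dimension drops
        have hd : ALdim (br σ.1 x false) σ.2 < ALdim σ.1 σ.2 := by
          rcases Nat.lt_or_ge σ.2 2 with hω1 | hω2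
          · have hσ1 : σ.2 = 1 := by omega
            rw [hσ1] at hT ⊢
            exact case2_key hT ⟨h, hh, hx⟩ h1
          · by_contra hnlt
            exact hE ⟨h1, hω2, hnlt⟩
        have hnat := natize_lt hT hd
        simp only [hx, PMF.pure_apply, stepSt_none, stepSt_some, reduceIte, ne_eq,
          Bool.true_eq_false, Bool.false_eq_true, not_false_eq_true, not_true_eq_false,
          if_true, if_false, and_false, zero_mul, one_mul, zero_add, add_zero]
        simp only [Phi]
        calc 1 + (((ALdim (br σ.1 x false) σ.2).toNat : ℝ≥0∞) + β * ((σ.2 - 1 : ℕ) : ℝ≥0∞))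
            ≤ ((ALdim σ.1 σ.2).toNat : ℝ≥0∞) + β * ((σ.2 - 1 : ℕ) : ℝ≥0∞) := by
              rw [← add_assoc, add_comm 1]
              gcongr
          _ ≤ _ + pe := le_add_right le_rfl
      · -- correct positive prediction
        simp only [hx, PMF.pure_apply, stepSt_none, stepSt_some, reduceIte, ne_eq,
          Bool.true_eq_false, Bool.false_eq_true, not_false_eq_true, not_true_eq_false,
          if_true, if_false, and_true, zero_mul, one_mul, zero_add, add_zero]
        rw [if_neg (fun hc => hE hc.1 : ¬(IsExplore σ.1 σ.2 x ∧ true = true))]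
        simp only [Phi]
        have hmono : ALdim (br σ.1 x true) σ.2 ≤ ALdim σ.1 σ.2 :=
          ALdim_mono (br_subset _ _ _) _
        have h2 := natize_le hT hmono
        calc ((ALdim (br σ.1 x true) σ.2).toNat : ℝ≥0∞) + β * ((σ.2 - 1 : ℕ) : ℝ≥0∞)
            ≤ ((ALdim σ.1 σ.2).toNat : ℝ≥0∞) + β * ((σ.2 - 1 : ℕ) : ℝ≥0∞) := by gcongr
          _ ≤ _ + pe := le_add_right le_rfl
  · -- all consistent hypotheses predict 0
    rw [if_neg h1]
    have hx : h x = false := by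
      cases hxc : h x
      · rfl
      · exact absurd ⟨h, hh, hxc⟩ h1
    simp only [hx, PMF.pure_apply, stepSt_none, reduceIte, ne_eq,
      Bool.true_eq_false, Bool.false_eq_true, not_false_eq_true, not_true_eq_false,
      if_true, if_false, zero_mul, one_mul, zero_add, add_zero]
    exact le_add_right le_rfl

end ATproof

namespace ATproof
variable {X : Type*}

lemma runAT_succ (A : List (X × Option Bool) → X → PMF Bool) (x : ℕ → X) (y : ℕ → Bool) (t : ℕ) :
    runAT A x y (t + 1) = (runAT A x y t).bind fun s =>
      (A s.1 (x t)).bind fun b =>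
        PMF.pure (s.1 ++ [(x t, if b then some (y t) else none)],
          s.2 + (if b ≠ y t then 1 else 0)) := rfl

lemma run_support {A : List (X × Option Bool) → X → PMF Bool} {x : ℕ → X} {y : ℕ → Bool}
    (P : List (X × Option Bool) × ℕ → Prop) (h0 : P ([], 0))
    (hstep : ∀ (t : ℕ) s (b : Bool), P s →
      P (s.1 ++ [(x t, if b then some (y t) else none)], s.2 + (if b ≠ y t then 1 else 0))) :
    ∀ t s, s ∈ (runAT A x y t).support → P s := by
  intro t
  induction t with
  | zero =>
      intro s hs
      rw [show runAT A x y 0 = PMF.pure ([], 0) from rfl, PMF.mem_support_pure_iff] at hs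
      rwa [hs]
  | succ t ih =>
      intro s hs
      rw [runAT_succ, PMF.mem_support_bind_iff] at hs
      obtain ⟨a, ha, hs⟩ := hs
      rw [PMF.mem_support_bind_iff] at hs
      obtain ⟨b, hb, hs⟩ := hs
      rw [PMF.mem_support_pure_iff] at hs
      rw [hs]
      exact hstep t a b (ih a ha)

lemma exp_step (A : List (X × Option Bool) → X → PMF Bool) (x : ℕ → X) (y : ℕ → Bool) (t : ℕ)
    (g : List (X × Option Bool) × ℕ → ℝ≥0∞) (c : ℝ≥0∞)
    (hpt : ∀ s ∈ (runAT A x y t).support,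
      (∑' b : Bool, A s.1 (x t) b *
        g (s.1 ++ [(x t, if b then some (y t) else none)], s.2 + (if b ≠ y t then 1 else 0)))
        ≤ g s + c) :
    (∑' s, runAT A x y (t + 1) s * g s) ≤ (∑' s, runAT A x y t s * g s) + c := by
  rw [runAT_succ]
  rw [tsum_bind_mul]
  simp only [tsum_bind_mul, tsum_pure_mul]
  calc (∑' s, runAT A x y t s * ∑' b : Bool, A s.1 (x t) b *
          g (s.1 ++ [(x t, if b then some (y t) else none)], s.2 + (if b ≠ y t then 1 else 0)))
      ≤ ∑' s, runAT A x y t s * (g s + c) := by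
        refine ENNReal.tsum_le_tsum fun s => ?_
        by_cases hs : s ∈ (runAT A x y t).support
        · exact mul_le_mul_right (hpt s hs) _
        · have h0 : runAT A x y t s = 0 := by simpa [PMF.mem_support_iff] using hs
          rw [h0, zero_mul, zero_mul]
    _ = (∑' s, runAT A x y t s * g s) + (∑' s, runAT A x y t s * c) := by
        simp_rw [mul_add]
        rw [ENNReal.tsum_add]
    _ = (∑' s, runAT A x y t s * g s) + c := by
        rw [ENNReal.tsum_mul_right, PMF.tsum_coe, one_mul]

noncomputable def learner (H : Set (X → Bool)) (w0 : ℕ) (pe : ℝ≥0∞) (hpe : pe ≤ 1) :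
    List (X × Option Bool) → X → PMF Bool :=
  fun hist => predictP pe hpe (stateOf H w0 hist)

theorem learner_bound (H : Set (X → Bool)) (w0 : ℕ) (hw0 : 1 ≤ w0) {pe β : ℝ≥0∞}
    (hpe : pe ≤ 1) (hβ0 : pe = 0 → β = ⊤) (hβ : pe ≠ 0 → pe * β = 1 - pe)
    (hALT : ALdim H w0 ≠ ⊤) (h : X → Bool) (hh : h ∈ H) (x : ℕ → X) (T : ℕ) :
    expMistakes (learner H w0 pe hpe) x (fun t => h (x t)) T
      ≤ (((ALdim H w0).toNat : ℝ≥0∞) + β * ((w0 - 1 : ℕ) : ℝ≥0∞)) + pe * T := by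
  set A := learner H w0 pe hpe with hA
  set y : ℕ → Bool := fun t => h (x t) with hy
  set F : List (X × Option Bool) × ℕ → ℝ≥0∞ :=
    fun s => (s.2 : ℝ≥0∞) + Phi β (stateOf H w0 s.1) with hF
  have hsupp : ∀ t s, s ∈ (runAT A x y t).support → Inv h (stateOf H w0 s.1) := by
    refine run_support _ ⟨hh, hw0, hALT⟩ ?_
    intro t s b hP
    rw [stateOf_append]
    exact inv_step (x t) b hP
  have key : ∀ t, (∑' s, runAT A x y (t + 1) s * F s) ≤ (∑' s, runAT A x y t s * F s) + pe := by
    intro t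
    refine exp_step A x y t F pe fun s hs => ?_
    have hI := hsupp t s hs
    have expand : ∀ b : Bool,
        F (s.1 ++ [(x t, if b then some (y t) else none)], s.2 + (if b ≠ y t then 1 else 0))
        = (s.2 : ℝ≥0∞) + ((if b ≠ y t then (1 : ℝ≥0∞) else 0)
            + Phi β (stepSt (stateOf H w0 s.1) (x t) (if b then some (y t) else none))) := by
      intro b
      simp only [hF]
      rw [stateOf_append]
      rw [Nat.cast_add, add_assoc]
      congr 1
      congr 1
      split <;> simp
    calc (∑' b : Bool, A s.1 (x t) b *
            F (s.1 ++ [(x t, if b then some (y t) else none)], s.2 + (if b ≠ y t then 1 else 0)))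
        = ∑' b : Bool, A s.1 (x t) b * ((s.2 : ℝ≥0∞) + ((if b ≠ y t then (1 : ℝ≥0∞) else 0)
            + Phi β (stepSt (stateOf H w0 s.1) (x t) (if b then some (y t) else none)))) :=
          tsum_congr fun b => by rw [expand b]
      _ = (∑' b : Bool, A s.1 (x t) b * (s.2 : ℝ≥0∞))
            + ∑' b : Bool, A s.1 (x t) b * ((if b ≠ y t then (1 : ℝ≥0∞) else 0)
            + Phi β (stepSt (stateOf H w0 s.1) (x t) (if b then some (y t) else none))) := by
          simp_rw [mul_add]
          rw [ENNReal.tsum_add]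
      _ ≤ (s.2 : ℝ≥0∞) + (Phi β (stateOf H w0 s.1) + pe) := by
          rw [ENNReal.tsum_mul_right, PMF.tsum_coe, one_mul]
          gcongr
          exact core_step (x t) hpe hβ0 hβ hI
      _ = F s + pe := by rw [hF, ← add_assoc]
  have all : ∀ t : ℕ, (∑' s, runAT A x y t s * F s) ≤ F ([], 0) + pe * t := by
    intro t
    induction t with
    | zero =>
        rw [show runAT A x y 0 = PMF.pure ([], 0) from rfl, tsum_pure_mul]
        simp
    | succ t ih =>
        calc (∑' s, runAT A x y (t + 1) s * F s) ≤ (∑' s, runAT A x y t s * F s) + pe := key t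
          _ ≤ (F ([], 0) + pe * t) + pe := by gcongr
          _ = F ([], 0) + pe * (t + 1 : ℕ) := by push_cast; ring
  have hF0 : F ([], 0) = ((ALdim H w0).toNat : ℝ≥0∞) + β * ((w0 - 1 : ℕ) : ℝ≥0∞) := by
    simp only [hF, Phi, stateOf, List.foldl_nil, Nat.cast_zero, zero_add]
  have hexp : expMistakes A x y T ≤ ∑' s, runAT A x y T s * F s := by
    refine ENNReal.tsum_le_tsum fun s => mul_le_mul_right ?_ _
    simp only [hF]
    exact le_self_add
  refine hexp.trans ((all T).trans ?_)
  rw [hF0]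

end ATproof

namespace ATproof
variable {X : Type*}

lemma expMistakes_le_rounds (A : List (X × Option Bool) → X → PMF Bool) (x : ℕ → X)
    (y : ℕ → Bool) (T : ℕ) : expMistakes A x y T ≤ T := by
  have all : ∀ t : ℕ, (∑' s, runAT A x y t s * ((s.2 : ℝ≥0∞))) ≤ t := by
    intro t
    induction t with
    | zero =>
        rw [show runAT A x y 0 = PMF.pure ([], 0) from rfl, tsum_pure_mul]
    | succ t ih =>
        have step := exp_step A x y t (fun s => (s.2 : ℝ≥0∞)) 1 ?_
        · refine step.trans ?_
          calc (∑' s, runAT A x y t s * (s.2 : ℝ≥0∞)) + 1 ≤ (t : ℝ≥0∞) + 1 := by gcongr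
            _ = ((t + 1 : ℕ) : ℝ≥0∞) := by push_cast; ring
        · intro s _
          have hb : ∀ b : Bool, ((s.2 + (if b ≠ y t then 1 else 0) : ℕ) : ℝ≥0∞)
              ≤ (s.2 : ℝ≥0∞) + 1 := by
            intro b
            have : s.2 + (if b ≠ y t then 1 else 0) ≤ s.2 + 1 := by split <;> omega
            exact_mod_cast this
          calc (∑' b : Bool, A s.1 (x t) b * ((s.2 + (if b ≠ y t then 1 else 0) : ℕ) : ℝ≥0∞))
              ≤ ∑' b : Bool, A s.1 (x t) b * ((s.2 : ℝ≥0∞) + 1) :=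
                ENNReal.tsum_le_tsum fun b => mul_le_mul_right (hb b) _
            _ = (s.2 : ℝ≥0∞) + 1 := by rw [ENNReal.tsum_mul_right, PMF.tsum_coe, one_mul]
  exact all T

lemma expMistakes_zero (A : List (X × Option Bool) → X → PMF Bool) (x : ℕ → X)
    (y : ℕ → Bool) : expMistakes A x y 0 = 0 := by
  rw [expMistakes, show runAT A x y 0 = PMF.pure ([], 0) from rfl, tsum_pure_mul]
  simp

lemma T_le_sqrt {w T : ℕ} (hw : T + 2 ≤ w) :
    (T : ℝ≥0∞) ≤ ENNReal.ofReal (2 * Real.sqrt (((w : ℝ) - 1) * T)) := by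
  rw [← ENNReal.ofReal_natCast T]
  refine ENNReal.ofReal_le_ofReal ?_
  have ht : (0 : ℝ) ≤ T := Nat.cast_nonneg T
  have haw : (T : ℝ) ≤ (w : ℝ) - 1 := by
    have : (T + 1 : ℝ) ≤ w := by exact_mod_cast Nat.le_of_succ_le hw
    linarith
  have h1 : Real.sqrt ((T : ℝ) * T) ≤ Real.sqrt (((w : ℝ) - 1) * T) :=
    Real.sqrt_le_sqrt (by nlinarith)
  have h2 : Real.sqrt ((T : ℝ) * T) = T := Real.sqrt_mul_self ht
  nlinarith [Real.sqrt_nonneg (((w : ℝ) - 1) * T)]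

lemma cost_bound (w0 T : ℕ) (hw0 : 1 ≤ w0) (hT : 1 ≤ T) :
    (1 - min 1 (ENNReal.ofReal (Real.sqrt (((w0 : ℝ) - 1) / T))))
        / (min 1 (ENNReal.ofReal (Real.sqrt (((w0 : ℝ) - 1) / T)))) * ((w0 - 1 : ℕ) : ℝ≥0∞)
      + (min 1 (ENNReal.ofReal (Real.sqrt (((w0 : ℝ) - 1) / T)))) * T
      ≤ ENNReal.ofReal (2 * Real.sqrt (((w0 : ℝ) - 1) * T)) := by
  set a : ℝ := (w0 : ℝ) - 1 with ha
  have hT0 : (0 : ℝ) < T := by exact_mod_cast hT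
  have ha0 : 0 ≤ a := by
    have : (1 : ℝ) ≤ w0 := by exact_mod_cast hw0
    rw [ha]
    linarith
  rcases Nat.lt_or_ge w0 2 with h1 | h2
  · -- w0 = 1
    have hw1 : w0 = 1 := by omega
    have haz : a = 0 := by rw [ha, hw1]; norm_num
    rw [haz, hw1]
    simp
  · -- w0 ≥ 2
    have ha1 : (1 : ℝ) ≤ a := by
      have : (2 : ℝ) ≤ w0 := by exact_mod_cast h2
      rw [ha]; linarith
    have hq0 : 0 < Real.sqrt (a / T) := Real.sqrt_pos.mpr (by positivity)
    have hsq : Real.sqrt (a / T) * Real.sqrt (a * T) = a := by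
      rw [← Real.sqrt_mul (by positivity)]
      rw [show a / T * (a * T) = a ^ 2 by field_simp]
      exact Real.sqrt_sq ha0
    have hqt : Real.sqrt (a / T) * T = Real.sqrt (a * T) := by
      have : Real.sqrt (a / T) * T = Real.sqrt (a / T) * Real.sqrt (T ^ 2) := by
        rw [Real.sqrt_sq hT0.le]
      rw [this, ← Real.sqrt_mul (by positivity)]
      congr 1
      field_simp
    rcases le_or_gt 1 (ENNReal.ofReal (Real.sqrt (a / T))) with hq1 | hq1
    · -- sqrt(a/T) ≥ 1 : explore with probability 1
      rw [min_eq_left hq1]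
      simp only [tsub_self, ENNReal.zero_div, zero_mul, one_mul, zero_add]
      have haT : (T : ℝ) ≤ a := by
        have h1r : (1 : ℝ) ≤ Real.sqrt (a / T) := by
          by_contra hcon
          push_neg at hcon
          have := ENNReal.ofReal_lt_one.mpr hcon
          exact absurd hq1 (not_le.mpr this)
        have : (1 : ℝ) ≤ a / T := by
          nlinarith [Real.sq_sqrt (show (0:ℝ) ≤ a / T by positivity), h1r]
        exact (one_le_div hT0).mp this
      rw [← ENNReal.ofReal_natCast T]
      refine ENNReal.ofReal_le_ofReal ?_
      have h1 : Real.sqrt ((T : ℝ) * T) ≤ Real.sqrt (a * T) := Real.sqrt_le_sqrt (by nlinarith)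
      have h2 : Real.sqrt ((T : ℝ) * T) = T := Real.sqrt_mul_self hT0.le
      nlinarith [Real.sqrt_nonneg (a * T)]
    · -- sqrt(a/T) < 1
      rw [min_eq_right hq1.le]
      have hpe0 : ENNReal.ofReal (Real.sqrt (a / T)) ≠ 0 :=
        (ENNReal.ofReal_pos.mpr hq0).ne'
      have hβle : (1 - ENNReal.ofReal (Real.sqrt (a / T))) / ENNReal.ofReal (Real.sqrt (a / T))
          ≤ 1 / ENNReal.ofReal (Real.sqrt (a / T)) := by
        gcongr
        exact tsub_le_self
      have hw0c : ((w0 - 1 : ℕ) : ℝ≥0∞) = ENNReal.ofReal a := by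
        rw [ha, ← ENNReal.ofReal_natCast (w0 - 1)]
        congr 1
        push_cast [Nat.cast_sub hw0]
        ring
      calc (1 - ENNReal.ofReal (Real.sqrt (a / T))) / ENNReal.ofReal (Real.sqrt (a / T))
              * ((w0 - 1 : ℕ) : ℝ≥0∞)
            + ENNReal.ofReal (Real.sqrt (a / T)) * T
          ≤ 1 / ENNReal.ofReal (Real.sqrt (a / T)) * ENNReal.ofReal a
            + ENNReal.ofReal (Real.sqrt (a / T)) * ENNReal.ofReal T := by
            rw [hw0c, ENNReal.ofReal_natCast]
            gcongr
        _ = ENNReal.ofReal (Real.sqrt (a * T)) + ENNReal.ofReal (Real.sqrt (a * T)) := by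
            have e1 : (1 : ℝ≥0∞) / ENNReal.ofReal (Real.sqrt (a / T)) * ENNReal.ofReal a
                = ENNReal.ofReal (Real.sqrt (a * T)) := by
              rw [one_div, ← ENNReal.ofReal_inv_of_pos hq0,
                ← ENNReal.ofReal_mul (by positivity)]
              congr 1
              rw [inv_mul_eq_div, div_eq_iff hq0.ne', mul_comm]
              exact hsq.symm
            have e2 : ENNReal.ofReal (Real.sqrt (a / T)) * ENNReal.ofReal ((T : ℕ) : ℝ)
                = ENNReal.ofReal (Real.sqrt (a * T)) := by
              rw [← ENNReal.ofReal_mul (by positivity), hqt]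
            rw [e1, e2]
        _ = ENNReal.ofReal (2 * Real.sqrt (a * T)) := by
            rw [← ENNReal.ofReal_add (by positivity) (by positivity)]
            congr 1
            ring

end ATproof


/-- randomized realizable upper bound for apple tasting. There is a
randomized apple-tasting learner whose expected number of mistakes over T rounds on any
stream realizable by H is at most inf_{w ∈ ℕ} AL_w(H) + 2√((w-1)T). -/
theorem apple_tasting_realizable_upper_bound {X : Type*} (H : Set (X → Bool)) (T : ℕ) :
    ∃ A : List (X × Option Bool) → X → PMF Bool,
      ∀ w : ℕ, 1 ≤ w → ∀ h ∈ H, ∀ x : ℕ → X,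
        expMistakes A x (fun t => h (x t)) T ≤
          enatToENNReal (ALdim H w) +
            ENNReal.ofReal (2 * Real.sqrt (((w : ℝ) - 1) * T)) := by
  classical
  rcases Nat.eq_zero_or_pos T with rfl | hT
  · refine ⟨fun _ _ => PMF.pure false, ?_⟩
    intro w hw h hh x
    rw [ATproof.expMistakes_zero]
    exact zero_le
  set B : ℕ → ℝ≥0∞ := fun w => enatToENNReal (ALdim H w)
      + ENNReal.ofReal (2 * Real.sqrt (((w : ℝ) - 1) * T)) with hB
  obtain ⟨w0, hw0mem, hw0min⟩ := Finset.exists_min_image (Finset.Icc 1 (T + 1)) B ⟨1, by simp⟩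
  rw [Finset.mem_Icc] at hw0mem
  obtain ⟨hw01, hw0T⟩ := hw0mem
  have hTbranch : ∀ (A : List (X × Option Bool) → X → PMF Bool) (w : ℕ) (h : X → Bool)
      (x : ℕ → X), T + 1 < w →
      expMistakes A x (fun t => h (x t)) T ≤ B w := by
    intro A w h x hgt
    refine (ATproof.expMistakes_le_rounds A x _ T).trans ?_
    refine (ATproof.T_le_sqrt (w := w) (by omega)).trans ?_
    exact le_add_self
  by_cases hALT : ALdim H w0 = ⊤
  · refine ⟨fun _ _ => PMF.pure false, ?_⟩
    intro w hw h hh x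
    rcases le_or_gt w (T + 1) with hle | hgt
    · have hmin : B w0 ≤ B w := hw0min w (Finset.mem_Icc.mpr ⟨hw, hle⟩)
      have hBtop : B w0 = ⊤ := by
        rw [hB]
        simp [enatToENNReal, hALT]
      have hBw : B w = ⊤ := by
        rw [hBtop] at hmin
        exact top_le_iff.mp hmin
      show expMistakes _ x _ T ≤ B w
      rw [hBw]
      exact le_top
    · exact hTbranch _ w h x hgt
  · set pe := min 1 (ENNReal.ofReal (Real.sqrt (((w0 : ℝ) - 1) / T))) with hpe_def
    have hpe : pe ≤ 1 := min_le_left _ _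
    set β := (1 - pe) / pe with hβ_def
    have hβ0 : pe = 0 → β = ⊤ := by
      intro h0
      rw [hβ_def, h0]
      simp
    have hβ : pe ≠ 0 → pe * β = 1 - pe := fun h0 =>
      ENNReal.mul_div_cancel' (fun h => absurd h h0) (fun h => absurd h (ne_top_of_le_ne_top ENNReal.one_ne_top hpe))
    refine ⟨ATproof.learner H w0 pe hpe, ?_⟩
    intro w hw h hh x
    rcases le_or_gt w (T + 1) with hle | hgt
    · have hmin : B w0 ≤ B w := hw0min w (Finset.mem_Icc.mpr ⟨hw, hle⟩)
      have main := ATproof.learner_bound H w0 hw01 hpe hβ0 hβ hALT h hh x T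
      have hcost := ATproof.cost_bound w0 T hw01 hT
      rw [← hpe_def, ← hβ_def] at hcost
      show expMistakes _ x _ T ≤ B w
      refine le_trans main (le_trans ?_ hmin)
      have henat : enatToENNReal (ALdim H w0) = ((ALdim H w0).toNat : ℝ≥0∞) := by
        rw [enatToENNReal, if_neg hALT]
      rw [hB]
      show (((ALdim H w0).toNat : ℝ≥0∞) + β * ((w0 - 1 : ℕ) : ℝ≥0∞)) + pe * T
          ≤ enatToENNReal (ALdim H w0) + ENNReal.ofReal (2 * Real.sqrt (((w0 : ℝ) - 1) * T))
      rw [henat, add_assoc]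
      exact add_le_add_right hcost _
    · exact hTbranch _ w h x hgt
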